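/- Key estimate relating the drift to the exclusion Dirichlet form: there is a constant K > 0, depending only on d, R, l, ρ and the kernel p, such that for every bounded measurable (local) f : Ω → R, |⟨φ·l, f⟩_{ν_ρ}| ≤ K · D_se(f)^{1/2}, where φ(η) = Σ_{|y|_1 ≤ R} y η(0)η(y), l ∈ R^d, and D_se is the Dirichlet form of the symmetric exclusion generator with kernel p. -/

import Mathlib

open MeasureTheory

noncomputable section

namespace SEPRC

/-- The lattice `ℤ^d`. -/
abbrev Zd (d : ℕ) := Fin d → ℤ

/-- The configuration space `Ω = {0,1}^{ℤ^d}`. -/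
abbrev Cfg (d : ℕ) := Zd d → Bool

/-- Occupation variable as a real number. -/
def ind : Bool → ℝ := fun b => if b then 1 else 0

/-- The ℓ¹ norm on `ℤ^d`. -/
def l1 {d : ℕ} (y : Zd d) : ℕ := ∑ i, (y i).natAbs

/-- The shift `(τ_y η)(x) = η(x + y)`. -/
def shift {d : ℕ} (y : Zd d) (η : Cfg d) : Cfg d := fun x => η (x + y)

/-- The configuration `η^{u,v}` with the occupation variables at `u` and `v` exchanged. -/
def swap {d : ℕ} (u v : Zd d) (η : Cfg d) : Cfg d :=
  fun x => if x = u then η v else if x = v then η u else η x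

/-- `ν` is the Bernoulli product measure of density `ρ` on `{0,1}^{ℤ^d}`. -/
def IsBernoulliProduct (d : ℕ) (ρ : ℝ) (ν : Measure (Cfg d)) : Prop :=
  IsProbabilityMeasure ν ∧
  ∀ (S : Finset (Zd d)) (a : Zd d → Bool),
    ν {η | ∀ z ∈ S, η z = a z} =
      ∏ z ∈ S, ENNReal.ofReal (if a z then ρ else 1 - ρ)

/-- A cylinder (local) function: it depends on finitely many coordinates. -/
def IsCylinder {d : ℕ} (f : Cfg d → ℝ) : Prop :=
  ∃ Λ : Finset (Zd d), ∀ η η' : Cfg d, (∀ x ∈ Λ, η x = η' x) → f η = f η'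

variable {d : ℕ}

/-- the site permutation underlying `swap` -/
def perm (u v x : Zd d) : Zd d := if x = u then v else if x = v then u else x

lemma perm_invol (u v x : Zd d) : perm u v (perm u v x) = x := by
  unfold perm
  by_cases h1 : x = u <;> by_cases h2 : x = v <;> split_ifs <;> simp_all

lemma swap_apply (u v : Zd d) (η : Cfg d) (x : Zd d) : swap u v η x = η (perm u v x) := by
  unfold swap perm; split_ifs <;> rfl

lemma swap_invol (u v : Zd d) (η : Cfg d) : swap u v (swap u v η) = η := by
  funext x; rw [swap_apply, swap_apply, perm_invol]

lemma measurable_swap (u v : Zd d) : Measurable (swap u v : Cfg d → Cfg d) := by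
  apply measurable_pi_lambda
  intro x
  have h : (fun η : Cfg d => swap u v η x) = fun η : Cfg d => η (perm u v x) :=
    funext fun η => swap_apply u v η x
  rw [h]; exact measurable_pi_apply _

def swapEquiv (u v : Zd d) : Cfg d ≃ᵐ Cfg d where
  toFun := swap u v
  invFun := swap u v
  left_inv := swap_invol u v
  right_inv := swap_invol u v
  measurable_toFun := measurable_swap u v
  measurable_invFun := measurable_swap u v

def cylSet (S : Finset (Zd d)) (a : Zd d → Bool) : Set (Cfg d) := {η | ∀ z ∈ S, η z = a z}

lemma measurableSet_cylSet (S : Finset (Zd d)) (a : Zd d → Bool) :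
    MeasurableSet (cylSet S a) := by
  have h : cylSet S a = ⋂ z ∈ S, (fun η : Cfg d => η z) ⁻¹' {a z} := by
    ext η; simp [cylSet]
  rw [h]
  exact MeasurableSet.biInter S.countable_toSet fun z _ =>
    (measurable_pi_apply z) (measurableSet_singleton (a z))

def cylFam (d : ℕ) : Set (Set (Cfg d)) := {s | ∃ S a, s = cylSet S a}

lemma pi_eq_generateFrom :
    (inferInstance : MeasurableSpace (Cfg d)) = .generateFrom (cylFam d) := by
  apply le_antisymm
  · have hmeas : ∀ z : Zd d,
        @Measurable _ _ (.generateFrom (cylFam d)) _ (fun η : Cfg d => η z) := by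
      intro z
      apply @measurable_to_countable' _ _ _ _ (.generateFrom (cylFam d))
      intro b
      apply MeasurableSpace.measurableSet_generateFrom
      exact ⟨{z}, fun _ => b, by ext η; simp [cylSet]⟩
    intro s hs
    exact (@measurable_pi_iff _ _ _ (.generateFrom (cylFam d)) _ id).mpr hmeas hs
  · apply MeasurableSpace.generateFrom_le
    rintro s ⟨S, a, rfl⟩
    exact measurableSet_cylSet S a

lemma isPiSystem_cylFam : IsPiSystem (cylFam d) := by
  rintro s ⟨S, a, rfl⟩ t ⟨T, b, rfl⟩ hne
  obtain ⟨η₀, hη₀⟩ := hne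
  refine ⟨S ∪ T, fun z => if z ∈ S then a z else b z, ?_⟩
  have hab : ∀ z, z ∈ S → z ∈ T → a z = b z := by
    intro z hS hT
    rw [← hη₀.1 z hS, ← hη₀.2 z hT]
  ext η
  simp only [cylSet, Set.mem_inter_iff, Set.mem_setOf_eq, Finset.mem_union]
  constructor
  · rintro ⟨h1, h2⟩ z hz
    by_cases hzS : z ∈ S
    · simp [hzS, h1 z hzS]
    · rcases hz with hz | hz
      · exact absurd hz hzS
      · simp [hzS, h2 z hz]
  · intro h
    constructor
    · intro z hz
      have := h z (Or.inl hz); simpa [hz] using this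
    · intro z hz
      have := h z (Or.inr hz)
      by_cases hzS : z ∈ S
      · rw [← hab z hzS hz]; simpa [hzS] using this
      · simpa [hzS] using this

lemma swap_measurePreserving {ρ : ℝ} {ν : Measure (Cfg d)}
    (hν : IsBernoulliProduct d ρ ν) (u v : Zd d) :
    MeasurePreserving (swap u v) ν ν := by
  obtain ⟨hprob, hcyl⟩ := hν
  refine ⟨measurable_swap u v, ?_⟩
  haveI := hprob
  haveI : IsProbabilityMeasure (ν.map (swap u v)) :=
    Measure.isProbabilityMeasure_map (measurable_swap u v).aemeasurable
  apply MeasureTheory.ext_of_generate_finite (cylFam d) pi_eq_generateFrom isPiSystem_cylFam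
  · rintro s ⟨S, a, rfl⟩
    rw [Measure.map_apply (measurable_swap u v) (measurableSet_cylSet S a)]
    have hpre : (swap u v) ⁻¹' (cylSet S a)
        = cylSet (S.image (perm u v)) (fun w => a (perm u v w)) := by
      ext η
      simp only [cylSet, Set.mem_preimage, Set.mem_setOf_eq, Finset.mem_image]
      constructor
      · rintro h w ⟨z, hz, rfl⟩
        rw [perm_invol]
        have := h z hz
        rwa [swap_apply] at this
      · intro h z hz
        rw [swap_apply]
        have := h (perm u v z) ⟨z, hz, rfl⟩
        rwa [perm_invol] at this
    rw [hpre]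
    have h1 := hcyl (S.image (perm u v)) (fun w => a (perm u v w))
    have h2 := hcyl S a
    rw [show cylSet (S.image (perm u v)) (fun w => a (perm u v w))
        = {η : Cfg d | ∀ z ∈ S.image (perm u v), η z = a (perm u v z)} from rfl, h1,
      show cylSet S a = {η : Cfg d | ∀ z ∈ S, η z = a z} from rfl, h2]
    rw [Finset.prod_image]
    · apply Finset.prod_congr rfl
      intro z _; rw [perm_invol]
    · intro x _ y _ hxy
      have := congrArg (perm u v) hxy
      rwa [perm_invol, perm_invol] at this
  · simp

lemma integral_swap_comp {ρ : ℝ} {ν : Measure (Cfg d)}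
    (hν : IsBernoulliProduct d ρ ν) (u v : Zd d) (g : Cfg d → ℝ) :
    ∫ η, g (swap u v η) ∂ν = ∫ η, g η ∂ν :=
  (swap_measurePreserving hν u v).integral_comp (swapEquiv u v).measurableEmbedding g

lemma integrable_of_bdd {ν : Measure (Cfg d)} [IsProbabilityMeasure ν] {g : Cfg d → ℝ}
    (hm : Measurable g) {C : ℝ} (hb : ∀ η, |g η| ≤ C) : Integrable g ν :=
  (integrable_const C).mono' hm.aestronglyMeasurable
    (Filter.Eventually.of_forall fun η => by simpa [Real.norm_eq_abs] using hb η)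

lemma integral_abs_le_sqrt {ν : Measure (Cfg d)} [IsProbabilityMeasure ν] {h : Cfg d → ℝ}
    (hm : Measurable h) {C : ℝ} (hb : ∀ η, |h η| ≤ C) :
    ∫ η, |h η| ∂ν ≤ Real.sqrt (∫ η, (h η) ^ 2 ∂ν) := by
  set S := ∫ η, (h η) ^ 2 ∂ν with hS
  have hS0 : 0 ≤ S := integral_nonneg fun η => sq_nonneg _
  have hint_abs : Integrable (fun η => |h η|) ν :=
    integrable_of_bdd hm.abs (C := C) fun η => by rw [abs_abs]; exact hb η
  have hint_sq : Integrable (fun η => (h η) ^ 2) ν := by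
    apply integrable_of_bdd (hm.pow_const 2) (C := C ^ 2)
    intro η
    rw [abs_pow]
    exact pow_le_pow_left₀ (abs_nonneg _) (hb η) 2
  have key : ∀ ε : ℝ, 0 < ε → ∫ η, |h η| ∂ν ≤ ε / 2 + S / (2 * ε) := by
    intro ε hε
    have h1 : ∫ η, |h η| ∂ν ≤ ∫ η, (ε / 2 + (h η) ^ 2 / (2 * ε)) ∂ν := by
      apply integral_mono hint_abs ((integrable_const _).add (hint_sq.div_const _))
      intro η
      show |h η| ≤ ε / 2 + (h η) ^ 2 / (2 * ε)
      have h2 := sq_nonneg (|h η| - ε)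
      have h3 : (h η) ^ 2 = |h η| ^ 2 := (sq_abs _).symm
      rw [h3, div_add_div _ _ (by norm_num : (2:ℝ) ≠ 0) (by positivity : 2 * ε ≠ 0),
        le_div_iff₀ (by positivity)]
      nlinarith
    rwa [integral_add (integrable_const _) (hint_sq.div_const _), integral_const,
      probReal_univ, smul_eq_mul, one_mul, integral_div, ← hS] at h1
  rcases eq_or_lt_of_le hS0 with hS0' | hSpos
  · have hle : ∫ η, |h η| ∂ν ≤ 0 := by
      apply le_of_forall_pos_le_add
      intro ε hε
      calc ∫ η, |h η| ∂ν ≤ ε / 2 + S / (2 * ε) := key ε hε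
        _ ≤ 0 + ε := by rw [← hS0']; simp; linarith
    calc ∫ η, |h η| ∂ν ≤ 0 := hle
      _ ≤ Real.sqrt S := Real.sqrt_nonneg _
  · have hsq : 0 < Real.sqrt S := Real.sqrt_pos.mpr hSpos
    have := key (Real.sqrt S) hsq
    have hdiv : S / (2 * Real.sqrt S) = Real.sqrt S / 2 := by
      rw [show (2 : ℝ) * Real.sqrt S = Real.sqrt S * 2 by ring, ← div_div, Real.div_sqrt]
    rw [hdiv] at this
    linarith

lemma neg_ne_self {y : Zd d} (hy : y ≠ 0) : -y ≠ y := by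
  intro h
  apply hy
  funext i
  have h2 := congrFun h i
  simp only [Pi.neg_apply] at h2
  have h3 : y i = 0 := by omega
  simpa using h3

lemma perm_left (u v : Zd d) : perm u v u = v := by unfold perm; simp

lemma perm_right (u v : Zd d) : perm u v v = u := by
  unfold perm; split_ifs with h h2
  · exact h
  · rfl
  · exact absurd rfl h2

lemma perm_other {u v x : Zd d} (h1 : x ≠ u) (h2 : x ≠ v) : perm u v x = x := by
  unfold perm; rw [if_neg h1, if_neg h2]

lemma perm_decomp {y : Zd d} (hy : y ≠ 0) (x : Zd d) :
    perm (-y) 0 (perm 0 y (perm (-y) 0 x)) = perm (-y) y x := by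
  have h1 : (-y : Zd d) ≠ 0 := neg_ne_zero.mpr hy
  have h2 : (-y : Zd d) ≠ y := neg_ne_self hy
  by_cases ha : x = -y
  · subst ha
    rw [perm_left, perm_left, perm_other (Ne.symm h2) hy, perm_left]
  by_cases hb : x = y
  · subst hb
    rw [perm_other (Ne.symm h2) hy, perm_right, perm_right, perm_right]
  by_cases hc : x = 0
  · subst hc
    rw [perm_right, perm_other h1 h2, perm_left, perm_other (Ne.symm h1) (Ne.symm hy)]
  · rw [perm_other ha hc, perm_other hc hb, perm_other ha hc, perm_other ha hb]

lemma swap_decomp {y : Zd d} (hy : y ≠ 0) (η : Cfg d) :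
    swap (-y) y η = swap (-y) 0 (swap 0 y (swap (-y) 0 η)) := by
  funext x
  rw [swap_apply, swap_apply, swap_apply, swap_apply, perm_decomp hy]

lemma ind01 (b : Bool) : 0 ≤ ind b ∧ ind b ≤ 1 := by
  unfold ind; split_ifs <;> norm_num

lemma measurable_ind_comp (z : Zd d) : Measurable fun η : Cfg d => ind (η z) :=
  (measurable_from_top (f := ind)).comp (measurable_pi_apply z)

/-- the key estimate: there is `K > 0`, depending only on
`d, R, l, ρ` and the kernel `p`, with `|⟨φ·l, f⟩_{ν_ρ}| ≤ K · D_se(f)^{1/2}`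
for all bounded measurable local `f`. -/
theorem stmt_10 (d R : ℕ) (hd : 0 < d) (hR : 1 ≤ R) (ρ : ℝ) (hρ : ρ ∈ Set.Icc (0:ℝ) 1)
    (ν : Measure (Cfg d)) (hν : IsBernoulliProduct d ρ ν)
    (B : Finset (Zd d)) (hB : ∀ y : Zd d, y ∈ B ↔ y ≠ 0 ∧ l1 y ≤ R)
    (p : Zd d → ℝ) (hp01 : ∀ x, p x ∈ Set.Icc (0:ℝ) 1)
    (hpsym : ∀ x, p (-x) = p x)
    (hpsupp : ∀ x, 0 < p x ↔ (x ≠ 0 ∧ l1 x ≤ R))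
    (hpsum : ∑ x ∈ B, p x = 1)
    (l : Fin d → ℝ) :
    ∃ K : ℝ, 0 < K ∧
      ∀ f : Cfg d → ℝ, Measurable f → (∃ Cf : ℝ, ∀ η, |f η| ≤ Cf) → IsCylinder f →
        |∫ η, (∑ y ∈ B, (∑ i, (y i : ℝ) * l i) * (ind (η 0) * ind (η y))) * f η ∂ν|
          ≤ K * Real.sqrt ((1/2) * ∑' uv : Zd d × Zd d,
              p (uv.2 - uv.1) * ∫ η, (f (swap uv.1 uv.2 η) - f η)^2 ∂ν) := by
  classical
  haveI hprob : IsProbabilityMeasure ν := hν.1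
  have hBneg : ∀ y ∈ B, -y ∈ B := by
    intro y hy
    rw [hB] at hy ⊢
    refine ⟨neg_ne_zero.mpr hy.1, ?_⟩
    have hl : l1 (-y) = l1 y := by
      unfold l1
      apply Finset.sum_congr rfl
      intro i _
      simp
    rw [hl]; exact hy.2
  have hyB : ∀ y ∈ B, y ≠ 0 := fun y hy => ((hB y).mp hy).1
  have hppos : ∀ y ∈ B, 0 < p y := fun y hy => (hpsupp y).mpr ((hB y).mp hy)
  refine ⟨1 + ∑ y ∈ B, |∑ i, (y i : ℝ) * l i| * Real.sqrt (18 / p y), ?_, ?_⟩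
  · have h0 : 0 ≤ ∑ y ∈ B, |∑ i, (y i : ℝ) * l i| * Real.sqrt (18 / p y) :=
      Finset.sum_nonneg fun y _ => mul_nonneg (abs_nonneg _) (Real.sqrt_nonneg _)
    linarith
  intro f hfm hfb hfc
  obtain ⟨Cf, hCf⟩ := hfb
  obtain ⟨Λ, hΛ⟩ := hfc
  have hCf0 : 0 ≤ Cf := le_trans (abs_nonneg _) (hCf fun _ => false)
  set T : ℝ := ∑' uv : Zd d × Zd d,
      p (uv.2 - uv.1) * ∫ η, (f (swap uv.1 uv.2 η) - f η) ^ 2 ∂ν with hT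
  -- basic bounds
  have hgbd : ∀ (y : Zd d) (η : Cfg d), |ind (η 0) * ind (η y)| ≤ 1 := by
    intro y η
    rw [abs_mul, abs_of_nonneg (ind01 _).1, abs_of_nonneg (ind01 _).1]
    nlinarith [(ind01 (η 0)).1, (ind01 (η 0)).2, (ind01 (η y)).1, (ind01 (η y)).2]
  have hgmeas : ∀ y : Zd d, Measurable fun η : Cfg d => ind (η 0) * ind (η y) :=
    fun y => (measurable_ind_comp 0).mul (measurable_ind_comp y)
  have hmeas_comp : ∀ u v : Zd d, Measurable fun η => f (swap u v η) :=
    fun u v => hfm.comp (measurable_swap u v)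
  have habs2 : ∀ a b : ℝ, |a| ≤ Cf → |b| ≤ Cf → |(a - b) ^ 2| ≤ (2 * Cf) ^ 2 := by
    intro a b ha hb
    rw [abs_pow]
    apply pow_le_pow_left₀ (abs_nonneg _)
    calc |a - b| ≤ |a| + |b| := abs_sub _ _
      _ ≤ 2 * Cf := by linarith
  have hsq_int : ∀ u v : Zd d, Integrable (fun η => (f (swap u v η) - f η) ^ 2) ν := by
    intro u v
    exact integrable_of_bdd (((hmeas_comp u v).sub hfm).pow_const 2)
      (C := (2 * Cf) ^ 2) fun η => habs2 _ _ (hCf _) (hCf _)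
  have hint_gf : ∀ y : Zd d, Integrable (fun η => (ind (η 0) * ind (η y)) * f η) ν := by
    intro y
    apply integrable_of_bdd ((hgmeas y).mul hfm) (C := Cf)
    intro η
    rw [Pi.mul_apply, abs_mul]
    calc |ind (η 0) * ind (η y)| * |f η| ≤ 1 * Cf :=
        mul_le_mul (hgbd y η) (hCf η) (abs_nonneg _) zero_le_one
      _ = Cf := one_mul Cf
  have hint_gfσ : ∀ y : Zd d, Integrable
      (fun η => (ind (η 0) * ind (η y)) * f (swap (-y) y η)) ν := by
    intro y
    apply integrable_of_bdd ((hgmeas y).mul (hmeas_comp (-y) y)) (C := Cf)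
    intro η
    rw [Pi.mul_apply, abs_mul]
    calc |ind (η 0) * ind (η y)| * |f (swap (-y) y η)| ≤ 1 * Cf :=
        mul_le_mul (hgbd y η) (hCf _) (abs_nonneg _) zero_le_one
      _ = Cf := one_mul Cf
  -- nonnegativity and summability of the Dirichlet-form terms
  have hterm_nonneg : ∀ uv : Zd d × Zd d,
      0 ≤ p (uv.2 - uv.1) * ∫ η, (f (swap uv.1 uv.2 η) - f η) ^ 2 ∂ν :=
    fun uv => mul_nonneg (hp01 _).1 (integral_nonneg fun η => sq_nonneg _)
  have hzero : ∀ uv : Zd d × Zd d,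
      uv ∉ (Λ ∪ B.biUnion fun b => Λ.image fun z => z + b) ×ˢ
            (Λ ∪ B.biUnion fun b => Λ.image fun z => z + b) →
      p (uv.2 - uv.1) * ∫ η, (f (swap uv.1 uv.2 η) - f η) ^ 2 ∂ν = 0 := by
    rintro ⟨u, v⟩ huv
    by_cases hp : p (v - u) = 0
    · simp [hp]
    · have hpos : 0 < p (v - u) := lt_of_le_of_ne (hp01 _).1 (Ne.symm hp)
      have hmem : v - u ∈ B := (hB _).mpr ((hpsupp _).mp hpos)
      have huΛ : u ∉ Λ := by
        intro hu
        apply huv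
        rw [Finset.mem_product]
        constructor
        · exact Finset.mem_union_left _ hu
        · apply Finset.mem_union_right
          apply Finset.mem_biUnion.mpr
          exact ⟨v - u, hmem, Finset.mem_image.mpr ⟨u, hu, by ring⟩⟩
      have hvΛ : v ∉ Λ := by
        intro hv
        apply huv
        rw [Finset.mem_product]
        refine ⟨?_, Finset.mem_union_left _ hv⟩
        apply Finset.mem_union_right
        apply Finset.mem_biUnion.mpr
        exact ⟨-(v - u), hBneg _ hmem, Finset.mem_image.mpr ⟨v, hv, by ring⟩⟩
      have hswap : ∀ η, f (swap u v η) = f η := by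
        intro η
        apply hΛ
        intro x hx
        rw [swap_apply]
        rw [perm_other (fun h => huΛ (by rw [← h]; exact hx)) (fun h => hvΛ (by rw [← h]; exact hx))]
      have : (fun η => (f (swap u v η) - f η) ^ 2) = fun _ => (0:ℝ) := by
        funext η; rw [hswap η]; ring
      simp [this]
  have hsummable : Summable (fun uv : Zd d × Zd d =>
      p (uv.2 - uv.1) * ∫ η, (f (swap uv.1 uv.2 η) - f η) ^ 2 ∂ν) :=
    summable_of_ne_finset_zero hzero
  have hT0 : 0 ≤ T := by rw [hT]; exact tsum_nonneg hterm_nonneg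
  have hsingle : ∀ u v : Zd d,
      p (v - u) * ∫ η, (f (swap u v η) - f η) ^ 2 ∂ν ≤ T := by
    intro u v
    rw [hT]
    exact Summable.le_tsum hsummable (u, v) fun j _ => hterm_nonneg j
  -- the integrals J y
  set J : Zd d → ℝ := fun y => ∫ η, (ind (η 0) * ind (η y)) * f η ∂ν with hJ
  -- Step 1 : expand the integral
  have hgoal_eq : ∫ η, (∑ y ∈ B, (∑ i, (y i : ℝ) * l i) * (ind (η 0) * ind (η y))) * f η ∂ν
      = ∑ y ∈ B, (∑ i, (y i : ℝ) * l i) * J y := by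
    have hfun : (fun η => (∑ y ∈ B, (∑ i, (y i : ℝ) * l i) * (ind (η 0) * ind (η y))) * f η)
        = fun η => ∑ y ∈ B, (∑ i, (y i : ℝ) * l i) * ((ind (η 0) * ind (η y)) * f η) := by
      funext η
      rw [Finset.sum_mul]
      exact Finset.sum_congr rfl fun y _ => by ring
    rw [hfun, integral_finset_sum B fun y _ => (hint_gf y).const_mul _]
    exact Finset.sum_congr rfl fun y _ => integral_const_mul _ _
  -- Step A : change of variables
  have key1 : ∀ y ∈ B, J (-y) = ∫ η, (ind (η 0) * ind (η y)) * f (swap (-y) y η) ∂ν := by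
    intro y hy
    have hy0 := hyB y hy
    have hcv := integral_swap_comp hν (-y) y (fun η => (ind (η 0) * ind (η (-y))) * f η)
    have e0 : ∀ η : Cfg d, swap (-y) y η 0 = η 0 := by
      intro η
      rw [swap_apply, perm_other (Ne.symm (neg_ne_zero.mpr hy0)) (Ne.symm hy0)]
    have emy : ∀ η : Cfg d, swap (-y) y η (-y) = η y := by
      intro η
      rw [swap_apply, perm_left]
    have hptw : (fun η => (ind (swap (-y) y η 0) * ind (swap (-y) y η (-y))) * f (swap (-y) y η))
        = fun η => (ind (η 0) * ind (η y)) * f (swap (-y) y η) := by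
      funext η
      rw [e0 η, emy η]
    rw [hJ]
    calc ∫ η, (ind (η 0) * ind (η (-y))) * f η ∂ν
        = ∫ η, (ind (swap (-y) y η 0) * ind (swap (-y) y η (-y))) * f (swap (-y) y η) ∂ν :=
          hcv.symm
      _ = ∫ η, (ind (η 0) * ind (η y)) * f (swap (-y) y η) ∂ν := by rw [hptw]
  -- Step B : difference formula
  have key2 : ∀ y ∈ B, J y - J (-y)
      = ∫ η, (ind (η 0) * ind (η y)) * (f η - f (swap (-y) y η)) ∂ν := by
    intro y hy
    rw [key1 y hy, hJ]
    rw [← integral_sub (hint_gf y) (hint_gfσ y)]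
    apply integral_congr_ae
    apply Filter.Eventually.of_forall
    intro η
    ring
  -- Step C : Cauchy-Schwarz
  have key3 : ∀ y ∈ B, |J y - J (-y)|
      ≤ Real.sqrt (∫ η, (f (swap (-y) y η) - f η) ^ 2 ∂ν) := by
    intro y hy
    rw [key2 y hy]
    have habs : |∫ η, (ind (η 0) * ind (η y)) * (f η - f (swap (-y) y η)) ∂ν|
        ≤ ∫ η, |(ind (η 0) * ind (η y)) * (f η - f (swap (-y) y η))| ∂ν := by
      have h := norm_integral_le_integral_norm (μ := ν)
        (fun η => (ind (η 0) * ind (η y)) * (f η - f (swap (-y) y η)))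
      simp only [Real.norm_eq_abs] at h
      exact h
    have hb2 : ∀ η : Cfg d, |f (swap (-y) y η) - f η| ≤ 2 * Cf := by
      intro η
      calc |f (swap (-y) y η) - f η| ≤ |f (swap (-y) y η)| + |f η| := abs_sub _ _
        _ ≤ 2 * Cf := by have := hCf η; have := hCf (swap (-y) y η); linarith
    have hmono : ∫ η, |(ind (η 0) * ind (η y)) * (f η - f (swap (-y) y η))| ∂ν
        ≤ ∫ η, |f (swap (-y) y η) - f η| ∂ν := by
      apply integral_mono
      · apply integrable_of_bdd ((hgmeas y).mul (hfm.sub (hmeas_comp (-y) y))).abs (C := 2 * Cf)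
        intro η
        rw [abs_abs, Pi.mul_apply, abs_mul]
        calc |ind (η 0) * ind (η y)| * |f η - f (swap (-y) y η)| ≤ 1 * (2 * Cf) := by
              apply mul_le_mul (hgbd y η) _ (abs_nonneg _) zero_le_one
              rw [abs_sub_comm]; exact hb2 η
          _ = 2 * Cf := one_mul _
      · apply integrable_of_bdd ((hmeas_comp (-y) y).sub hfm).abs (C := 2 * Cf)
        intro η
        rw [abs_abs]; exact hb2 η
      intro η
      show |ind (η 0) * ind (η y) * (f η - f (swap (-y) y η))| ≤ |f (swap (-y) y η) - f η|
      rw [abs_mul, abs_sub_comm (f η)]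
      calc |ind (η 0) * ind (η y)| * |f (swap (-y) y η) - f η|
          ≤ 1 * |f (swap (-y) y η) - f η| :=
            mul_le_mul_of_nonneg_right (hgbd y η) (abs_nonneg _)
        _ = |f (swap (-y) y η) - f η| := one_mul _
    have hcs := integral_abs_le_sqrt (ν := ν)
      (hm := (hmeas_comp (-y) y).sub hfm) (C := 2 * Cf) hb2
    exact le_trans habs (le_trans hmono hcs)
  -- Step D : decomposition of the long jump and comparison with T
  have key4 : ∀ y ∈ B, ∫ η, (f (swap (-y) y η) - f η) ^ 2 ∂ν
      ≤ 18 / p y * ((1/2) * T) := by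
    intro y hy
    have hy0 := hyB y hy
    have hpy := hppos y hy
    set IA := ∫ η, (f (swap (-y) 0 η) - f η) ^ 2 ∂ν with hIAdef
    set IB := ∫ η, (f (swap 0 y η) - f η) ^ 2 ∂ν with hIBdef
    have hIA : p y * IA ≤ T := by
      have h := hsingle (-y) 0
      simpa using h
    have hIB : p y * IB ≤ T := by
      have h := hsingle 0 y
      simpa using h
    have hIA0 : 0 ≤ IA := integral_nonneg fun η => sq_nonneg _
    have hIB0 : 0 ≤ IB := integral_nonneg fun η => sq_nonneg _
    -- pointwise telescoping bound
    have hpt : ∀ η : Cfg d, (f (swap (-y) y η) - f η) ^ 2 ≤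
        3 * ((f (swap (-y) 0 (swap 0 y (swap (-y) 0 η))) - f (swap 0 y (swap (-y) 0 η))) ^ 2
          + ((f (swap 0 y (swap (-y) 0 η)) - f (swap (-y) 0 η)) ^ 2
          + (f (swap (-y) 0 η) - f η) ^ 2)) := by
      intro η
      rw [swap_decomp hy0]
      set a := f (swap (-y) 0 (swap 0 y (swap (-y) 0 η)))
      set b := f (swap 0 y (swap (-y) 0 η))
      set cc := f (swap (-y) 0 η)
      set dd := f η
      nlinarith [sq_nonneg ((a - b) - (b - cc)), sq_nonneg ((a - b) - (cc - dd)),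
        sq_nonneg ((b - cc) - (cc - dd))]
    -- integrability of the three pieces
    have hM1 : Measurable fun η : Cfg d => swap 0 y (swap (-y) 0 η) :=
      (measurable_swap 0 y).comp (measurable_swap (-y) 0)
    have hT1int : Integrable (fun η =>
        (f (swap (-y) 0 (swap 0 y (swap (-y) 0 η))) - f (swap 0 y (swap (-y) 0 η))) ^ 2) ν := by
      have hm : Measurable fun η : Cfg d =>
          (f (swap (-y) 0 (swap 0 y (swap (-y) 0 η))) - f (swap 0 y (swap (-y) 0 η))) ^ 2 :=
        ((((hmeas_comp (-y) 0)).comp hM1).sub (hfm.comp hM1)).pow_const 2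
      exact integrable_of_bdd hm (C := (2 * Cf) ^ 2) fun η => habs2 _ _ (hCf _) (hCf _)
    have hT2int : Integrable (fun η =>
        (f (swap 0 y (swap (-y) 0 η)) - f (swap (-y) 0 η)) ^ 2) ν := by
      have hm : Measurable fun η : Cfg d =>
          (f (swap 0 y (swap (-y) 0 η)) - f (swap (-y) 0 η)) ^ 2 :=
        (((hmeas_comp 0 y).comp (measurable_swap (-y) 0)).sub
          (hfm.comp (measurable_swap (-y) 0))).pow_const 2
      exact integrable_of_bdd hm (C := (2 * Cf) ^ 2) fun η => habs2 _ _ (hCf _) (hCf _)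
    have hT3int : Integrable (fun η => (f (swap (-y) 0 η) - f η) ^ 2) ν := hsq_int (-y) 0
    -- integral identities by measure preservation
    have e1 : ∫ η, (f (swap (-y) 0 (swap 0 y (swap (-y) 0 η))) - f (swap 0 y (swap (-y) 0 η))) ^ 2 ∂ν
        = IA := by
      have h1 := integral_swap_comp hν (-y) 0
        (fun ζ => (f (swap (-y) 0 (swap 0 y ζ)) - f (swap 0 y ζ)) ^ 2)
      have h2 := integral_swap_comp hν 0 y (fun ζ => (f (swap (-y) 0 ζ) - f ζ) ^ 2)
      exact h1.trans h2
    have e2 : ∫ η, (f (swap 0 y (swap (-y) 0 η)) - f (swap (-y) 0 η)) ^ 2 ∂ν = IB := by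
      exact integral_swap_comp hν (-y) 0 (fun ζ => (f (swap 0 y ζ) - f ζ) ^ 2)
    have hmono2 : ∫ η, (f (swap (-y) y η) - f η) ^ 2 ∂ν ≤ 3 * (IA + (IB + IA)) := by
      have h1 : ∫ η, (f (swap (-y) y η) - f η) ^ 2 ∂ν
          ≤ ∫ η, 3 * ((f (swap (-y) 0 (swap 0 y (swap (-y) 0 η))) - f (swap 0 y (swap (-y) 0 η))) ^ 2
            + ((f (swap 0 y (swap (-y) 0 η)) - f (swap (-y) 0 η)) ^ 2
            + (f (swap (-y) 0 η) - f η) ^ 2)) ∂ν := by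
        apply integral_mono (hsq_int (-y) y) _ hpt
        exact ((hT1int.add (hT2int.add hT3int)).const_mul 3)
      have hg23 : Integrable (fun η =>
          (f (swap 0 y (swap (-y) 0 η)) - f (swap (-y) 0 η)) ^ 2
            + (f (swap (-y) 0 η) - f η) ^ 2) ν := hT2int.add hT3int
      rw [integral_const_mul, integral_add hT1int hg23,
        integral_add hT2int hT3int, e1, e2] at h1
      exact h1
    calc ∫ η, (f (swap (-y) y η) - f η) ^ 2 ∂ν ≤ 3 * (IA + (IB + IA)) := hmono2
      _ ≤ 18 / p y * ((1/2) * T) := by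
        rw [div_mul_eq_mul_div, le_div_iff₀ hpy]
        nlinarith [hIA, hIB]
  -- symmetrization
  have hBimg : B.image (fun y => -y) = B := by
    apply Finset.ext
    intro z
    simp only [Finset.mem_image]
    constructor
    · rintro ⟨w, hw, rfl⟩
      exact hBneg w hw
    · intro hz
      exact ⟨-z, hBneg z hz, neg_neg z⟩
  have hre : ∑ y ∈ B, (∑ i, (y i : ℝ) * l i) * J y
      = ∑ y ∈ B, (∑ i, ((-y) i : ℝ) * l i) * J (-y) := by
    conv_lhs => rw [← hBimg]
    rw [Finset.sum_image]
    intro x _ y _ hxy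
    exact neg_injective hxy
  have hcneg : ∀ y : Zd d, (∑ i, ((-y) i : ℝ) * l i) = -(∑ i, (y i : ℝ) * l i) := by
    intro y
    rw [← Finset.sum_neg_distrib]
    apply Finset.sum_congr rfl
    intro i _
    simp
  have hsym : ∑ y ∈ B, (∑ i, (y i : ℝ) * l i) * J y
      = (1/2) * ∑ y ∈ B, (∑ i, (y i : ℝ) * l i) * (J y - J (-y)) := by
    have h1 : ∑ y ∈ B, (∑ i, (y i : ℝ) * l i) * (J y - J (-y))
        = ∑ y ∈ B, (∑ i, (y i : ℝ) * l i) * J y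
          - ∑ y ∈ B, (∑ i, (y i : ℝ) * l i) * J (-y) := by
      rw [← Finset.sum_sub_distrib]
      apply Finset.sum_congr rfl
      intro y _
      ring
    have h2 : ∑ y ∈ B, (∑ i, (y i : ℝ) * l i) * J (-y)
        = - ∑ y ∈ B, (∑ i, (y i : ℝ) * l i) * J y := by
      rw [hre, ← Finset.sum_neg_distrib]
      apply Finset.sum_congr rfl
      intro y _
      rw [hcneg y]
      ring
    rw [h1, h2]
    ring
  -- final estimate
  have hperterm : ∀ y ∈ B, |(∑ i, (y i : ℝ) * l i) * (J y - J (-y))|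
      ≤ |∑ i, (y i : ℝ) * l i| * (Real.sqrt (18 / p y) * Real.sqrt ((1/2) * T)) := by
    intro y hy
    rw [abs_mul]
    apply mul_le_mul_of_nonneg_left _ (abs_nonneg _)
    calc |J y - J (-y)| ≤ Real.sqrt (∫ η, (f (swap (-y) y η) - f η) ^ 2 ∂ν) := key3 y hy
      _ ≤ Real.sqrt (18 / p y * ((1/2) * T)) := Real.sqrt_le_sqrt (key4 y hy)
      _ = Real.sqrt (18 / p y) * Real.sqrt ((1/2) * T) :=
          Real.sqrt_mul (div_nonneg (by norm_num) (hppos y hy).le) _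
  have hsum0 : 0 ≤ ∑ y ∈ B, |∑ i, (y i : ℝ) * l i| * Real.sqrt (18 / p y) :=
    Finset.sum_nonneg fun y _ => mul_nonneg (abs_nonneg _) (Real.sqrt_nonneg _)
  calc |∫ η, (∑ y ∈ B, (∑ i, (y i : ℝ) * l i) * (ind (η 0) * ind (η y))) * f η ∂ν|
      = |(1/2) * ∑ y ∈ B, (∑ i, (y i : ℝ) * l i) * (J y - J (-y))| := by
        rw [hgoal_eq, hsym]
    _ ≤ (1/2) * ∑ y ∈ B, |∑ i, (y i : ℝ) * l i| * (Real.sqrt (18 / p y) * Real.sqrt ((1/2) * T)) := by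
        rw [abs_mul, abs_of_nonneg (by norm_num : (0:ℝ) ≤ 1/2)]
        apply mul_le_mul_of_nonneg_left _ (by norm_num : (0:ℝ) ≤ 1/2)
        calc |∑ y ∈ B, (∑ i, (y i : ℝ) * l i) * (J y - J (-y))|
            ≤ ∑ y ∈ B, |(∑ i, (y i : ℝ) * l i) * (J y - J (-y))| :=
              Finset.abs_sum_le_sum_abs _ _
          _ ≤ ∑ y ∈ B, |∑ i, (y i : ℝ) * l i| * (Real.sqrt (18 / p y) * Real.sqrt ((1/2) * T)) :=
              Finset.sum_le_sum hperterm
    _ = (1/2) * ((∑ y ∈ B, |∑ i, (y i : ℝ) * l i| * Real.sqrt (18 / p y)) * Real.sqrt ((1/2) * T)) := by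
        rw [Finset.sum_mul]
        congr 1
        apply Finset.sum_congr rfl
        intro y _
        ring
    _ ≤ (1 + ∑ y ∈ B, |∑ i, (y i : ℝ) * l i| * Real.sqrt (18 / p y)) * Real.sqrt ((1/2) * T) := by
        nlinarith [Real.sqrt_nonneg ((1/2) * T), hsum0]

end SEPRC
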